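/- Let α be irrational with denominators (q_n), let F : 𝕋 → ℝ have bounded variation Var(F), and let R_α(x) = x + α. Then for every n ∈ ℕ and every x ∈ 𝕋: |∑_{j=0}^{q_n−1} F(x + jα) − q_n ∫_𝕋 F dλ'| ≤ Var(F), where λ' is normalized Lebesgue measure on 𝕋. (Denjoy–Koksma inequality.) -/

import Mathlib

open MeasureTheory intervalIntegral Set GenContFract

namespace DKaux

variable {F : ℝ → ℝ}



variable {F : ℝ → ℝ}

lemma var_translate (hper : Function.Periodic F 1) (m : ℤ) (a b : ℝ) :
    eVariationOn F (Set.Icc (a + m) (b + m)) = eVariationOn F (Set.Icc a b) := by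
  set φ : ℝ → ℝ := fun z => z + (m : ℝ) with hφdef
  have hφ : MonotoneOn φ (Set.Icc a b) := fun u _ v _ huv => by simp [hφdef]; linarith
  have himg : φ '' Set.Icc a b = Set.Icc (a + m) (b + m) := by
    simpa [hφdef] using Set.image_add_const_Icc (m : ℝ) a b
  have hcomp : F ∘ φ = F := by
    funext z
    have := (hper.int_mul m) z
    simpa [hφdef] using this
  rw [← himg, ← eVariationOn.comp_eq_of_monotoneOn F φ hφ, hcomp]

lemma var_window (hper : Function.Periodic F 1) (y : ℝ) :
    eVariationOn F (Set.Icc y (y + 1)) = eVariationOn F (Set.Icc 0 1) := by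
  set m : ℤ := ⌈y⌉ with hm
  have h1 : y ≤ (m : ℝ) := Int.le_ceil y
  have h2 : (m : ℝ) ≤ y + 1 := le_of_lt (Int.ceil_lt_add_one y)
  set t : ℝ := y + 1 - m with ht
  have ht0 : 0 ≤ t := by simp [ht]; linarith
  have ht1 : t ≤ 1 := by simp [ht]; linarith
  have hsplit := eVariationOn.Icc_add_Icc F (s := (univ : Set ℝ)) h1 h2 (Set.mem_univ (m : ℝ))
  simp only [Set.univ_inter] at hsplit
  have hA : eVariationOn F (Set.Icc y (m : ℝ)) = eVariationOn F (Set.Icc t 1) := by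
    have := var_translate hper (m - 1) t 1
    have he1 : t + ((m : ℤ) - 1 : ℤ) = y := by push_cast; linarith [ht]
    have he2 : (1 : ℝ) + ((m : ℤ) - 1 : ℤ) = m := by push_cast; ring
    rw [he1, he2] at this
    exact this
  have hB : eVariationOn F (Set.Icc (m : ℝ) (y + 1)) = eVariationOn F (Set.Icc 0 t) := by
    have := var_translate hper m 0 t
    have he1 : (0 : ℝ) + (m : ℤ) = m := by push_cast; ring
    have he2 : t + (m : ℤ) = y + 1 := by push_cast; linarith [ht]
    rw [he1, he2] at this
    exact this
  have hsplit2 := eVariationOn.Icc_add_Icc F (s := (univ : Set ℝ)) ht0 ht1 (Set.mem_univ t)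
  simp only [Set.univ_inter] at hsplit2
  rw [← hsplit, hA, hB, ← hsplit2, add_comm]

lemma var_le (hper : Function.Periodic F 1) {a b : ℝ} (h1 : b ≤ a + 1) :
    eVariationOn F (Set.Icc a b) ≤ eVariationOn F (Set.Icc 0 1) := by
  rw [← var_window hper a]
  exact eVariationOn.mono F (Set.Icc_subset_Icc le_rfl h1)

lemma integrable_of_bv (hper : Function.Periodic F 1)
    (hBV : BoundedVariationOn F (Set.Icc 0 1)) {a b : ℝ} (hab : a ≤ b) (h1 : b ≤ a + 1) :
    IntervalIntegrable F volume a b := by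
  have hbv : BoundedVariationOn F (Set.Icc a b) :=
    fun h => hBV (eq_top_iff.2 (h ▸ var_le hper h1))
  obtain ⟨P, Q, hP, hQ, hFPQ⟩ :=
    hbv.locallyBoundedVariationOn.exists_monotoneOn_sub_monotoneOn
  have hu : Set.uIcc a b = Set.Icc a b := Set.uIcc_of_le hab
  have hPi : IntervalIntegrable P volume a b := (hu ▸ hP).intervalIntegrable
  have hQi : IntervalIntegrable Q volume a b := (hu ▸ hQ).intervalIntegrable
  have := hPi.sub hQi
  rw [hFPQ]
  exact this




variable {α : ℝ}

lemma not_term (hα : Irrational α) (m : ℕ) : ¬(GenContFract.of α).TerminatedAt m := by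
  intro hterm
  have hT : (GenContFract.of α).Terminates := ⟨m, hterm⟩
  rw [GenContFract.terminates_iff_rat] at hT
  obtain ⟨qq, hqq⟩ := hT
  exact hα ⟨qq, hqq.symm⟩

lemma int_contsAux (hα : Irrational α) :
    ∀ m, ((∃ z : ℤ, ((GenContFract.of α).contsAux m).a = z) ∧
      (∃ z : ℤ, ((GenContFract.of α).contsAux m).b = z)) ∧
      ((∃ z : ℤ, ((GenContFract.of α).contsAux (m + 1)).a = z) ∧
      (∃ z : ℤ, ((GenContFract.of α).contsAux (m + 1)).b = z)) := by
  intro m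
  induction m with
  | zero =>
    refine ⟨⟨⟨1, ?_⟩, ⟨0, ?_⟩⟩, ⟨⟨⌊α⌋, ?_⟩, ⟨1, ?_⟩⟩⟩
    · rw [GenContFract.zeroth_contAux_eq_one_zero]; simp
    · rw [GenContFract.zeroth_contAux_eq_one_zero]; simp
    · rw [GenContFract.first_contAux_eq_h_one]; simp [GenContFract.of_h_eq_floor]
    · rw [GenContFract.first_contAux_eq_h_one]; simp
  | succ k ih =>
    refine ⟨ih.2, ?_⟩
    obtain ⟨gp, hgp⟩ : ∃ gp, (GenContFract.of α).s.get? k = some gp :=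
      Option.ne_none_iff_exists'.1 (not_term hα k)
    have ha1 : gp.a = 1 := of_partNum_eq_one (partNum_eq_s_a hgp)
    obtain ⟨zb, hzb⟩ : ∃ z : ℤ, gp.b = (z : ℝ) :=
      exists_int_eq_of_partDen (partDen_eq_s_b hgp)
    have hrec := contsAux_recurrence hgp rfl rfl
    obtain ⟨⟨za, hza⟩, ⟨zb', hzb'⟩⟩ := ih.1
    obtain ⟨⟨za1, hza1⟩, ⟨zb1, hzb1⟩⟩ := ih.2
    rw [show k + 1 + 1 = k + 2 from rfl, hrec]
    constructor
    · exact ⟨zb * za1 + za, by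
        simp [GenContFract.nextConts, GenContFract.nextNum, ha1, hzb, hza, hza1]⟩
    · exact ⟨zb * zb1 + zb', by
        simp [GenContFract.nextConts, GenContFract.nextDen, ha1, hzb, hzb', hzb1]⟩

lemma int_nums (hα : Irrational α) (m : ℕ) : ∃ z : ℤ, (GenContFract.of α).nums m = z := by
  have := ((int_contsAux hα m).2).1
  rwa [GenContFract.num_eq_conts_a, GenContFract.nth_cont_eq_succ_nth_contAux]

lemma det_eq (hα : Irrational α) (m : ℕ) :
    (GenContFract.of α).nums m * (GenContFract.of α).dens (m + 1) -
      (GenContFract.of α).dens m * (GenContFract.of α).nums (m + 1) = (-1) ^ (m + 1) := by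
  exact SimpContFract.determinant (s := (ContFract.of α : SimpContFract ℝ)) (not_term hα m)


lemma int_dens {α : ℝ} (hα : Irrational α) (m : ℕ) : ∃ z : ℤ, (GenContFract.of α).dens m = z := by
  have := ((int_contsAux hα m).2).2
  rwa [GenContFract.den_eq_conts_b, GenContFract.nth_cont_eq_succ_nth_contAux]


lemma reindex {Q : ℕ} (hQ : 0 < Q) {p : ℤ} (hcop : IsCoprime (Q : ℤ) p) (h : ℕ → ℝ) :
    ∑ j ∈ Finset.range Q, h (((j : ℤ) * p % (Q : ℤ)).toNat) = ∑ k ∈ Finset.range Q, h k := by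
  set r : ℕ → ℕ := fun j => ((j : ℤ) * p % (Q : ℤ)).toNat with hr
  have hQZ : (0 : ℤ) < (Q : ℤ) := by exact_mod_cast hQ
  have hrlt : ∀ j, r j < Q := by
    intro j
    have h1 : (j : ℤ) * p % (Q : ℤ) < Q := Int.emod_lt_of_pos _ hQZ
    have h2 : 0 ≤ (j : ℤ) * p % (Q : ℤ) := Int.emod_nonneg _ (ne_of_gt hQZ)
    simp only [hr]
    omega
  have hinj : Set.InjOn r (Finset.range Q) := by
    intro j1 hj1 j2 hj2 heq
    simp only [Finset.coe_range, Set.mem_Iio] at hj1 hj2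
    have h1 : 0 ≤ (j1 : ℤ) * p % (Q : ℤ) := Int.emod_nonneg _ (ne_of_gt hQZ)
    have h2 : 0 ≤ (j2 : ℤ) * p % (Q : ℤ) := Int.emod_nonneg _ (ne_of_gt hQZ)
    have heq' : (j1 : ℤ) * p % (Q : ℤ) = (j2 : ℤ) * p % (Q : ℤ) := by
      simp only [hr] at heq; omega
    have hmod : (Q : ℤ) ∣ ((j2 : ℤ) - j1) * p := by
      have hd : (Q : ℤ) ∣ (j2 : ℤ) * p - (j1 : ℤ) * p := Int.ModEq.dvd (heq' : Int.ModEq _ _ _)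
      have : ((j2 : ℤ) - j1) * p = (j2 : ℤ) * p - (j1 : ℤ) * p := by ring
      rwa [this]
    have hdvd : (Q : ℤ) ∣ ((j2 : ℤ) - j1) := hcop.dvd_of_dvd_mul_right hmod
    have hj1' : (j1 : ℤ) < Q := by exact_mod_cast hj1
    have hj2' : (j2 : ℤ) < Q := by exact_mod_cast hj2
    have hz : (j2 : ℤ) - j1 = 0 := Int.eq_zero_of_abs_lt_dvd hdvd (by
      rw [abs_lt]; constructor <;> omega)
    omega
  have himg : (Finset.range Q).image r = Finset.range Q := by
    apply Finset.eq_of_subset_of_card_le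
    · intro k hk
      simp only [Finset.mem_image] at hk
      obtain ⟨j, _, rfl⟩ := hk
      exact Finset.mem_range.2 (hrlt j)
    · rw [Finset.card_image_of_injOn hinj]
  calc ∑ j ∈ Finset.range Q, h (r j) = ∑ k ∈ (Finset.range Q).image r, h k :=
        (Finset.sum_image (fun a ha b hb hab => hinj ha hb hab)).symm
    _ = ∑ k ∈ Finset.range Q, h k := by rw [himg]

lemma avg_bound (hper : Function.Periodic F 1) (hBV : BoundedVariationOn F (Set.Icc 0 1))
    {a L z : ℝ} (hL : 0 < L) (hL1 : L ≤ 1) (hz : z ∈ Set.Icc a (a + L)) :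
    |L * F z - ∫ t in a..(a + L), F t| ≤ L * (eVariationOn F (Set.Icc a (a + L))).toReal := by
  have hab : a ≤ a + L := by linarith
  have hfin : BoundedVariationOn F (Set.Icc a (a + L)) :=
    fun h => hBV (eq_top_iff.2 (h ▸ var_le hper (by linarith)))
  have hint : IntervalIntegrable F volume a (a + L) :=
    integrable_of_bv hper hBV hab (by linarith)
  have key : ∀ t ∈ Set.uIoc a (a + L), ‖F z - F t‖ ≤
      (eVariationOn F (Set.Icc a (a + L))).toReal := by
    intro t ht
    rw [Set.uIoc_of_le hab] at ht
    have ht' : t ∈ Set.Icc a (a + L) := ⟨le_of_lt ht.1, ht.2⟩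
    have := hfin.dist_le hz ht'
    simpa [Real.dist_eq] using this
  have h1 : (∫ t in a..(a + L), (F z - F t)) = L * F z - ∫ t in a..(a + L), F t := by
    rw [intervalIntegral.integral_sub intervalIntegrable_const hint,
      intervalIntegral.integral_const]
    simp [smul_eq_mul]
    try ring
  have h2 := intervalIntegral.norm_integral_le_of_norm_le_const key
  rw [h1] at h2
  have h3 : |a + L - a| = L := by rw [abs_of_pos (by linarith)]; ring_nf
  rw [h3] at h2
  simpa [Real.norm_eq_abs, mul_comm] using h2

lemma var_sum (hper : Function.Periodic F 1) (y : ℝ) {Q : ℕ} (hQ : 0 < Q) :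
    ∑ k ∈ Finset.range Q,
        eVariationOn F (Set.Icc (y + (k : ℝ) / Q) (y + ((k : ℝ) + 1) / Q)) =
      eVariationOn F (Set.Icc 0 1) := by
  have hQR : (0 : ℝ) < (Q : ℝ) := by exact_mod_cast hQ
  have main : ∀ K, K ≤ Q → ∑ k ∈ Finset.range K,
      eVariationOn F (Set.Icc (y + (k : ℝ) / Q) (y + ((k : ℝ) + 1) / Q)) =
      eVariationOn F (Set.Icc y (y + (K : ℝ) / Q)) := by
    intro K
    induction K with
    | zero =>
      intro _
      simp only [Finset.range_zero, Finset.sum_empty, Nat.cast_zero, zero_div, add_zero]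
      exact (eVariationOn.subsingleton F (by rw [Set.Icc_self]; exact Set.subsingleton_singleton)).symm
    | succ K ih =>
      intro hK
      rw [Finset.sum_range_succ, ih (le_of_lt (Nat.lt_of_succ_le hK))]
      have h1 : y ≤ y + (K : ℝ) / Q := by
        have : 0 ≤ (K : ℝ) / Q := by positivity
        linarith
      have h2 : y + (K : ℝ) / Q ≤ y + ((K : ℝ) + 1) / Q := by
        have : (K : ℝ) / Q ≤ ((K : ℝ) + 1) / Q := by
          gcongr
          linarith
        linarith
      have hsplit := eVariationOn.Icc_add_Icc F (s := (Set.univ : Set ℝ)) h1 h2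
        (Set.mem_univ _)
      simp only [Set.univ_inter] at hsplit
      rw [hsplit]
      congr 2
      push_cast
      ring
  have := main Q le_rfl
  rw [this, div_self (ne_of_gt hQR)]
  exact var_window hper y

end DKaux

theorem stmt6 (α : ℝ) (hα : Irrational α) (q : ℕ → ℕ)
    (hq : ∀ m, ((q m : ℝ)) = (GenContFract.of α).dens m)
    (F : ℝ → ℝ) (hper : Function.Periodic F 1)
    (hBV : BoundedVariationOn F (Set.Icc 0 1))
    (n : ℕ) (x : ℝ) :
    |(∑ j ∈ Finset.range (q n), F (x + (j : ℝ) * α)) -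
        (q n : ℝ) * ∫ t in (0:ℝ)..1, F t| ≤
      (eVariationOn F (Set.Icc 0 1)).toReal := by
  classical
  set Q : ℕ := q n with hQdef
  have hQR : (Q : ℝ) = (GenContFract.of α).dens n := hq n
  have hfib : (Nat.fib (n + 1) : ℝ) ≤ (GenContFract.of α).dens n :=
    GenContFract.succ_nth_fib_le_of_nth_den (Or.inr (DKaux.not_term hα _))
  have hQ1 : 1 ≤ Q := by
    have h1 : (1 : ℝ) ≤ (Nat.fib (n + 1) : ℝ) := by
      exact_mod_cast Nat.fib_pos.mpr n.succ_pos
    have : (1 : ℝ) ≤ (Q : ℝ) := by rw [hQR]; linarith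
    exact_mod_cast this
  have hQpos : 0 < Q := hQ1
  have hQRpos : (0 : ℝ) < (Q : ℝ) := by exact_mod_cast hQpos
  have hQQ' : (Q : ℝ) ≤ (GenContFract.of α).dens (n + 1) := by
    rw [hQR]; exact GenContFract.of_den_mono
  have hQ'pos : 0 < (GenContFract.of α).dens (n + 1) := lt_of_lt_of_le hQRpos hQQ'
  obtain ⟨p, hp⟩ := DKaux.int_nums hα n
  have habs : |α - (p : ℝ) / (Q : ℝ)| ≤ 1 / ((Q : ℝ) * (GenContFract.of α).dens (n + 1)) := by
    have h1 := GenContFract.abs_sub_convs_le (DKaux.not_term hα n)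
    rw [GenContFract.conv_eq_num_div_den, hp, ← hQR] at h1
    exact h1
  obtain ⟨A1, hA1⟩ := DKaux.int_nums hα (n + 1)
  obtain ⟨B1, hB1⟩ := DKaux.int_dens hα (n + 1)
  have hdetR : (p : ℝ) * (B1 : ℝ) - (Q : ℝ) * (A1 : ℝ) = (-1) ^ (n + 1) := by
    have h1 := DKaux.det_eq hα n
    rw [hp, hA1, hB1, ← hQR] at h1
    exact h1
  have hdetZ : p * B1 - (Q : ℤ) * A1 = (-1) ^ (n + 1) := by
    have h2 : ((p * B1 - (Q : ℤ) * A1 : ℤ) : ℝ) = (((-1 : ℤ) ^ (n + 1) : ℤ) : ℝ) := by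
      push_cast
      linarith [hdetR]
    exact_mod_cast h2
  have hε : ((-1 : ℤ) ^ (n + 1)) * ((-1 : ℤ) ^ (n + 1)) = 1 := by
    rw [← pow_add]
    exact Even.neg_one_pow ⟨n + 1, by ring⟩
  have hbez : (-((-1 : ℤ) ^ (n + 1) * A1)) * (Q : ℤ) + ((-1 : ℤ) ^ (n + 1) * B1) * p = 1 := by
    linear_combination ((-1 : ℤ) ^ (n + 1)) * hdetZ + hε
  have hcop : IsCoprime ((Q : ℤ)) p := ⟨_, _, hbez⟩
  set δ : ℝ := α - (p : ℝ) / (Q : ℝ) with hδdef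
  have hδ0 : δ ≠ 0 := by
    intro h0
    apply hα
    refine ⟨(p : ℚ) / (Q : ℚ), ?_⟩
    have h1 : α = (p : ℝ) / (Q : ℝ) := by
      have := hδdef ▸ h0
      linarith [this]
    rw [h1]
    push_cast
    ring
  set y : ℝ := if 0 < δ then x else x - 1 / (Q : ℝ) with hy
  have hjδ : ∀ j : ℕ, j < Q → (j : ℝ) * |δ| ≤ 1 / (Q : ℝ) := by
    intro j hj
    have hjR : (j : ℝ) ≤ (Q : ℝ) - 1 := by
      have : (j : ℝ) + 1 ≤ (Q : ℝ) := by exact_mod_cast Nat.succ_le_of_lt hj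
      linarith
    have habs' : |δ| * ((Q : ℝ) * (GenContFract.of α).dens (n + 1)) ≤ 1 := by
      rw [← le_div_iff₀ (by positivity)]
      exact habs
    rw [le_div_iff₀ hQRpos]
    have h0 : (0 : ℝ) ≤ |δ| := abs_nonneg _
    have h0j : (0 : ℝ) ≤ (j : ℝ) := Nat.cast_nonneg _
    nlinarith [mul_le_mul_of_nonneg_left hQQ' h0, mul_nonneg h0 (le_of_lt hQRpos),
      mul_le_mul_of_nonneg_right hjR h0]
  set r : ℕ → ℕ := fun j => ((j : ℤ) * p % (Q : ℤ)).toNat with hr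
  set Sk : ℕ → ℝ :=
    fun k => ∫ t in (y + (k : ℝ) / (Q : ℝ))..(y + ((k : ℝ) + 1) / (Q : ℝ)), F t with hSk
  set Vk : ℕ → ENNReal :=
    fun k => eVariationOn F (Set.Icc (y + (k : ℝ) / (Q : ℝ)) (y + ((k : ℝ) + 1) / (Q : ℝ)))
    with hVk
  have hIcc_le : ∀ k : ℕ, y + ((k : ℝ) + 1) / (Q : ℝ) ≤ (y + (k : ℝ) / (Q : ℝ)) + 1 := by
    intro k
    have h1 : 1 / (Q : ℝ) ≤ 1 := by
      rw [div_le_one hQRpos]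
      exact_mod_cast hQ1
    have h2 : ((k : ℝ) + 1) / (Q : ℝ) = (k : ℝ) / (Q : ℝ) + 1 / (Q : ℝ) := by ring
    rw [h2]
    linarith
  have hablek : ∀ k : ℕ, y + (k : ℝ) / (Q : ℝ) ≤ y + ((k : ℝ) + 1) / (Q : ℝ) := by
    intro k
    have : (k : ℝ) / (Q : ℝ) ≤ ((k : ℝ) + 1) / (Q : ℝ) := by gcongr; linarith
    linarith
  have hSsum : ∑ k ∈ Finset.range Q, Sk k = ∫ t in (0:ℝ)..1, F t := by
    have hadj : ∀ k, k < Q → IntervalIntegrable F MeasureTheory.volume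
        (y + (k : ℝ) / (Q : ℝ)) (y + ((k + 1 : ℕ) : ℝ) / (Q : ℝ)) := by
      intro k _
      have hc : ((k + 1 : ℕ) : ℝ) = (k : ℝ) + 1 := by push_cast; ring
      rw [hc]
      exact DKaux.integrable_of_bv hper hBV (hablek k) (hIcc_le k)
    have h1 := intervalIntegral.sum_integral_adjacent_intervals
      (a := fun i : ℕ => y + (i : ℝ) / (Q : ℝ)) (μ := MeasureTheory.volume) (n := Q) hadj
    have h2 : ∑ k ∈ Finset.range Q, Sk k =
        ∑ k ∈ Finset.range Q,
          ∫ t in (y + (k : ℝ) / (Q : ℝ))..(y + ((k + 1 : ℕ) : ℝ) / (Q : ℝ)), F t := by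
      apply Finset.sum_congr rfl
      intro k _
      have hc : ((k + 1 : ℕ) : ℝ) = (k : ℝ) + 1 := by push_cast; ring
      rw [hSk, hc]
    rw [h2, h1]
    show (∫ t in (y + ((0 : ℕ) : ℝ) / (Q : ℝ))..(y + ((Q : ℕ) : ℝ) / (Q : ℝ)), F t) =
      ∫ t in (0:ℝ)..1, F t
    have ha0 : y + ((0 : ℕ) : ℝ) / (Q : ℝ) = y := by simp
    have haQ : y + ((Q : ℕ) : ℝ) / (Q : ℝ) = y + 1 := by
      rw [div_self (ne_of_gt hQRpos)]
    rw [ha0, haQ]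
    have := hper.intervalIntegral_add_eq y 0
    simpa using this
  have hVsum : ∑ k ∈ Finset.range Q, Vk k = eVariationOn F (Set.Icc 0 1) :=
    DKaux.var_sum hper y hQpos
  have hVfin : ∀ k ∈ Finset.range Q, Vk k ≠ ⊤ := by
    intro k _
    have h1 : Vk k ≤ eVariationOn F (Set.Icc 0 1) := DKaux.var_le hper (hIcc_le k)
    exact fun h => hBV (eq_top_iff.2 (h ▸ h1))
  have hmain : ∀ j ∈ Finset.range Q,
      |F (x + (j : ℝ) * α) - (Q : ℝ) * Sk (r j)| ≤ (Vk (r j)).toReal := by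
    intro j hj
    have hjQ : j < Q := Finset.mem_range.1 hj
    set m : ℤ := (j : ℤ) * p / (Q : ℤ) with hm
    set z : ℝ := x + (j : ℝ) * α - (m : ℝ) with hz
    have hF : F (x + (j : ℝ) * α) = F z := by
      have h1 := hper.sub_int_mul_eq (x := x + (j : ℝ) * α) m
      rw [mul_one] at h1
      exact h1.symm
    have hrj : ((r j : ℕ) : ℝ) = (((j : ℤ) * p % (Q : ℤ) : ℤ) : ℝ) := by
      have h0 : (0 : ℤ) ≤ (j : ℤ) * p % (Q : ℤ) :=
        Int.emod_nonneg _ (by exact_mod_cast ne_of_gt hQpos)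
      have h1 := Int.toNat_of_nonneg h0
      exact_mod_cast congrArg (fun z : ℤ => (z : ℝ)) h1
    have hemod : (((j : ℤ) * p % (Q : ℤ) : ℤ) : ℝ) + (Q : ℝ) * (m : ℝ) = (j : ℝ) * (p : ℝ) := by
      have h1 := Int.emod_add_mul_ediv ((j : ℤ) * p) (Q : ℤ)
      rw [hm]
      exact_mod_cast h1
    set c : ℝ := y + ((r j : ℕ) : ℝ) / (Q : ℝ) with hc
    have hzc : z = c + ((j : ℝ) * δ - (y - x)) := by
      rw [hz, hc, hrj]
      have h2 : (((j : ℤ) * p % (Q : ℤ) : ℤ) : ℝ) =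
          (j : ℝ) * (p : ℝ) - (Q : ℝ) * (m : ℝ) := by linarith [hemod]
      rw [h2, hδdef]
      field_simp
      ring
    have hbd := hjδ j hjQ
    have hrange : 0 ≤ (j : ℝ) * δ - (y - x) ∧ (j : ℝ) * δ - (y - x) ≤ 1 / (Q : ℝ) := by
      by_cases hpos : 0 < δ
      · have hyx : y = x := by rw [hy, if_pos hpos]
        have habsδ : |δ| = δ := abs_of_pos hpos
        rw [habsδ] at hbd
        constructor
        · rw [hyx]
          simp only [sub_self, sub_zero]
          exact mul_nonneg (Nat.cast_nonneg _) (le_of_lt hpos)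
        · rw [hyx]; simp only [sub_self, sub_zero]; exact hbd
      · have hneg : δ < 0 := lt_of_le_of_ne (not_lt.1 hpos) hδ0
        have hyx : y = x - 1 / (Q : ℝ) := by rw [hy, if_neg hpos]
        have habsδ : |δ| = -δ := abs_of_neg hneg
        rw [habsδ, mul_neg] at hbd
        have hjδneg : (j : ℝ) * δ ≤ 0 :=
          mul_nonpos_of_nonneg_of_nonpos (Nat.cast_nonneg _) (le_of_lt hneg)
        have h1 : 0 ≤ (j : ℝ) * δ - (y - x) := by rw [hyx]; linarith
        have h2 : (j : ℝ) * δ - (y - x) ≤ 1 / (Q : ℝ) := by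
          rw [hyx]
          have h3 : x - 1 / (Q : ℝ) - x = -(1 / (Q : ℝ)) := by ring
          rw [h3]
          calc (j : ℝ) * δ - -(1 / (Q : ℝ)) = (j : ℝ) * δ + 1 / (Q : ℝ) := by ring
            _ ≤ 0 + 1 / (Q : ℝ) := by linarith
            _ = 1 / (Q : ℝ) := by ring
        exact ⟨h1, h2⟩
    have hzmem : z ∈ Set.Icc c (c + 1 / (Q : ℝ)) := by
      rw [hzc]
      constructor
      · linarith [hrange.1]
      · linarith [hrange.2]
    have hLpos : (0 : ℝ) < 1 / (Q : ℝ) := by positivity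
    have hL1 : 1 / (Q : ℝ) ≤ 1 := by
      rw [div_le_one hQRpos]
      exact_mod_cast hQ1
    have havg := DKaux.avg_bound hper hBV hLpos hL1 hzmem
    have hce : c + 1 / (Q : ℝ) = y + (((r j : ℕ) : ℝ) + 1) / (Q : ℝ) := by
      rw [hc]; field_simp; ring
    have hSkr : Sk (r j) = ∫ t in c..(c + 1 / (Q : ℝ)), F t := by
      rw [show Sk (r j) = ∫ t in (y + ((r j : ℕ) : ℝ) / (Q : ℝ))..(y +
        (((r j : ℕ) : ℝ) + 1) / (Q : ℝ)), F t from rfl, ← hc, ← hce]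
    have hVkr : Vk (r j) = eVariationOn F (Set.Icc c (c + 1 / (Q : ℝ))) := by
      rw [show Vk (r j) = eVariationOn F (Set.Icc (y + ((r j : ℕ) : ℝ) / (Q : ℝ)) (y +
        (((r j : ℕ) : ℝ) + 1) / (Q : ℝ))) from rfl, ← hc, ← hce]
    rw [hF, hSkr, hVkr]
    have h3 : |F z - (Q : ℝ) * ∫ t in c..(c + 1 / (Q : ℝ)), F t| =
        (Q : ℝ) * |1 / (Q : ℝ) * F z - ∫ t in c..(c + 1 / (Q : ℝ)), F t| := by
      rw [← abs_of_pos hQRpos, ← abs_mul]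
      congr 1
      field_simp
      rw [abs_of_pos hQRpos]; ring
    rw [h3]
    calc (Q : ℝ) * |1 / (Q : ℝ) * F z - ∫ t in c..(c + 1 / (Q : ℝ)), F t|
        ≤ (Q : ℝ) * (1 / (Q : ℝ) * (eVariationOn F (Set.Icc c (c + 1 / (Q : ℝ)))).toReal) :=
          mul_le_mul_of_nonneg_left havg (le_of_lt hQRpos)
      _ = (eVariationOn F (Set.Icc c (c + 1 / (Q : ℝ)))).toReal := by field_simp
  have hSreidx : ∑ j ∈ Finset.range Q, Sk (r j) = ∑ k ∈ Finset.range Q, Sk k :=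
    DKaux.reindex hQpos hcop Sk
  have hVreidx : ∑ j ∈ Finset.range Q, (Vk (r j)).toReal =
      ∑ k ∈ Finset.range Q, (Vk k).toReal :=
    DKaux.reindex hQpos hcop (fun k => (Vk k).toReal)
  have hQI : (Q : ℝ) * ∫ t in (0:ℝ)..1, F t = ∑ j ∈ Finset.range Q, (Q : ℝ) * Sk (r j) := by
    rw [← Finset.mul_sum, hSreidx, hSsum]
  calc |(∑ j ∈ Finset.range Q, F (x + (j : ℝ) * α)) - (Q : ℝ) * ∫ t in (0:ℝ)..1, F t|
      = |∑ j ∈ Finset.range Q, (F (x + (j : ℝ) * α) - (Q : ℝ) * Sk (r j))| := by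
        rw [Finset.sum_sub_distrib, hQI]
    _ ≤ ∑ j ∈ Finset.range Q, |F (x + (j : ℝ) * α) - (Q : ℝ) * Sk (r j)| :=
        Finset.abs_sum_le_sum_abs _ _
    _ ≤ ∑ j ∈ Finset.range Q, (Vk (r j)).toReal := Finset.sum_le_sum hmain
    _ = ∑ k ∈ Finset.range Q, (Vk k).toReal := hVreidx
    _ = (∑ k ∈ Finset.range Q, Vk k).toReal := (ENNReal.toReal_sum hVfin).symm
    _ = (eVariationOn F (Set.Icc 0 1)).toReal := by rw [hVsum]
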